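/- Let E, A ∈ ℂ^{n×n}, B ∈ ℂ^{n×m}, C ∈ ℂ^{p×n}, D ∈ ℂ^{p×m}, and let P_l, P_r ∈ ℂ^{n×n} satisfy P_l² = P_l, P_r² = P_r, E P_r = P_l E, and A P_r = P_l A. Let V_f, W_f ∈ ℂ^{n×k} and V_∞, W_∞ ∈ ℂ^{n×k_∞}, and set V = [V_f, V_∞] and W = [W_f, W_∞]. Assume the column span of W_∞ contains the range of (I − P_l)ᵀ. Let σ ∈ ℂ and c ∈ ℂ^p be such that σE − A is invertible, ((σE − A)ᵀ)^{-1} P_rᵀ Cᵀ c lies in the column span of W_f, and σ Wᵀ E V − Wᵀ A V is invertible. Then, with E_r = Wᵀ E V, A_r = Wᵀ A V, B_r = Wᵀ B, C_r = C V, and D_r = D, the left tangential interpolation condition cᵀ G(σ) = cᵀ G_r(σ) holds, where G(s) = C(sE − A)^{-1}B + D and G_r(s) = C_r(sE_r − A_r)^{-1}B_r + D_r. -/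

import Mathlib

open Matrix

/-- Interpolatory model reduction of DAEs (Theorem 3.1 of Gugercin–Stykel–Wyatt,
left tangential condition).  With `V = [V_f, V_∞]`, `W = [W_f, W_∞]`, where the
column span of `W_∞` contains the range of `(I − P_l)ᵀ` and
`((σE − A)ᵀ)⁻¹ P_rᵀ Cᵀ c` lies in the column span of `W_f`, the Petrov–Galerkin
reduced model satisfies `cᵀ G(σ) = cᵀ G_r(σ)`. -/
theorem dae_left_tangential_interpolation
    (n m p k kinf : ℕ)
    (E A : Matrix (Fin n) (Fin n) ℂ)
    (B : Matrix (Fin n) (Fin m) ℂ)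
    (C : Matrix (Fin p) (Fin n) ℂ)
    (D : Matrix (Fin p) (Fin m) ℂ)
    (Pl Pr : Matrix (Fin n) (Fin n) ℂ)
    (hPl : Pl * Pl = Pl) (hPr : Pr * Pr = Pr)
    (hEP : E * Pr = Pl * E) (hAP : A * Pr = Pl * A)
    (Vf Wf : Matrix (Fin n) (Fin k) ℂ)
    (Vinf Winf : Matrix (Fin n) (Fin kinf) ℂ)
    (V W : Matrix (Fin n) (Fin k ⊕ Fin kinf) ℂ)
    (hV : V = fromCols Vf Vinf)
    (hW : W = fromCols Wf Winf)
    (hWinf : ∀ x : Fin n → ℂ, ∃ y : Fin kinf → ℂ,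
      ((1 - Pl)ᵀ).mulVec x = Winf.mulVec y)
    (σ : ℂ) (c : Fin p → ℂ)
    (hfull : IsUnit (σ • E - A))
    (hspan : ∃ ζ : Fin k → ℂ,
      ((σ • E - A)ᵀ)⁻¹.mulVec (Prᵀ.mulVec (Cᵀ.mulVec c)) = Wf.mulVec ζ)
    (hred : IsUnit (σ • (Wᵀ * E * V) - Wᵀ * A * V)) :
    Matrix.vecMul c (C * (σ • E - A)⁻¹ * B + D)
      = Matrix.vecMul c (C * V * (σ • (Wᵀ * E * V) - Wᵀ * A * V)⁻¹ * (Wᵀ * B) + D) := by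

  obtain ⟨ζ, hζ⟩ := hspan
  set K : Matrix (Fin n) (Fin n) ℂ := σ • E - A with hKdef
  have hKdet : IsUnit K.det := (isUnit_iff_isUnit_det K).mp hfull
  have hKinv : K * K⁻¹ = 1 := mul_nonsing_inv K hKdet
  have hKinv' : K⁻¹ * K = 1 := nonsing_inv_mul K hKdet
  have hKTdet : IsUnit Kᵀ.det := by rwa [det_transpose]
  have hKTinv : Kᵀ * Kᵀ⁻¹ = 1 := mul_nonsing_inv _ hKTdet
  -- commutation with projectors
  have hKPr : K * Pr = Pl * K := by
    simp only [hKdef, Matrix.sub_mul, Matrix.mul_sub, Matrix.smul_mul, Matrix.mul_smul,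
      hEP, hAP]
  have h1 : K * (1 - Pr) = (1 - Pl) * K := by
    simp only [Matrix.mul_sub, Matrix.sub_mul, Matrix.mul_one, Matrix.one_mul, hKPr]
  have h2 : (1 - Pr) * K⁻¹ = K⁻¹ * (1 - Pl) := by
    calc (1 - Pr) * K⁻¹ = K⁻¹ * (K * (1 - Pr)) * K⁻¹ := by
          rw [← Matrix.mul_assoc, hKinv', Matrix.one_mul]
      _ = K⁻¹ * (1 - Pl) := by
          rw [h1, ← Matrix.mul_assoc, Matrix.mul_assoc, hKinv, Matrix.mul_one]
  have hcomm : Kᵀ⁻¹ * (1 - Pr)ᵀ = (1 - Pl)ᵀ * Kᵀ⁻¹ := by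
    have := congrArg Matrix.transpose h2
    simp only [Matrix.transpose_mul, Matrix.transpose_nonsing_inv] at this
    rw [← Matrix.transpose_nonsing_inv] at this ⊢
    exact this
  -- the vector g
  set u : Fin n → ℂ := Cᵀ.mulVec c with hu
  set g : Fin n → ℂ := Kᵀ⁻¹.mulVec u with hg
  obtain ⟨y, hy⟩ := hWinf (Kᵀ⁻¹.mulVec u)
  have hgW : g = W.mulVec (Sum.elim ζ y) := by
    have hsplit : u = Prᵀ.mulVec u + (1 - Pr)ᵀ.mulVec u := by
      rw [← Matrix.add_mulVec, ← Matrix.transpose_add]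
      simp
    have h2nd : Kᵀ⁻¹.mulVec ((1 - Pr)ᵀ.mulVec u) = Winf.mulVec y := by
      rw [Matrix.mulVec_mulVec, hcomm, ← Matrix.mulVec_mulVec, hy]
    rw [hg]
    conv_lhs => rw [hsplit]
    rw [Matrix.mulVec_add, hζ, h2nd, hW, Matrix.fromCols_mulVec_sumElim]
  have hgK : Matrix.vecMul g K = Matrix.vecMul c C := by
    have h3 : Kᵀ.mulVec g = u := by
      rw [hg, Matrix.mulVec_mulVec, hKTinv, Matrix.one_mulVec]
    have h4 := h3
    rw [Matrix.mulVec_transpose] at h4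
    rw [h4, hu, Matrix.mulVec_transpose]
  -- reduced pencil
  set Kr : Matrix (Fin k ⊕ Fin kinf) (Fin k ⊕ Fin kinf) ℂ :=
    σ • (Wᵀ * E * V) - Wᵀ * A * V with hKr
  have hKrK : Kr = Wᵀ * K * V := by
    rw [hKr, hKdef]
    simp only [Matrix.sub_mul, Matrix.mul_sub, Matrix.smul_mul, Matrix.mul_smul]
  have hKrdet : IsUnit Kr.det := (isUnit_iff_isUnit_det Kr).mp hred
  have hKrinv : Kr * Kr⁻¹ = 1 := mul_nonsing_inv Kr hKrdet
  -- finish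
  rw [Matrix.vecMul_add, Matrix.vecMul_add]
  congr 1
  have hL : Matrix.vecMul c (C * K⁻¹ * B) = Matrix.vecMul g B := by
    rw [Matrix.mul_assoc, ← Matrix.vecMul_vecMul, hgK.symm, Matrix.vecMul_vecMul,
      ← Matrix.mul_assoc, hKinv, Matrix.one_mul]
  have hgz : g = Matrix.vecMul (Sum.elim ζ y) Wᵀ := by
    rw [hgW, Matrix.vecMul_transpose]
  have hR : Matrix.vecMul c (C * V * Kr⁻¹ * (Wᵀ * B)) = Matrix.vecMul g B := by
    have assoc1 : C * V * Kr⁻¹ * (Wᵀ * B) = C * (V * Kr⁻¹ * (Wᵀ * B)) := by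
      simp only [Matrix.mul_assoc]
    rw [assoc1, ← Matrix.vecMul_vecMul, hgK.symm, Matrix.vecMul_vecMul]
    rw [hgz, Matrix.vecMul_vecMul]
    have : Wᵀ * (K * (V * Kr⁻¹ * (Wᵀ * B))) = Wᵀ * B := by
      calc Wᵀ * (K * (V * Kr⁻¹ * (Wᵀ * B)))
          = (Wᵀ * K * V) * Kr⁻¹ * (Wᵀ * B) := by
            simp only [Matrix.mul_assoc]
        _ = Wᵀ * B := by rw [← hKrK, hKrinv, Matrix.one_mul]
    rw [this, ← Matrix.vecMul_vecMul, ← hgz]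
  rw [hL, hR]
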